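/- Suppose a metric measure space (X, d, μ) with all balls of positive finite measure supports a p-Poincaré inequality. Then X is connected. -/

import Mathlib

open MeasureTheory ENNReal NNReal Set Metric Filter

noncomputable section

/-- A (compact rectifiable) curve in a metric space `X`, given by a `1`-Lipschitz
(arclength-type) parametrization on the interval `[0, len]`. -/
structure Curve (X : Type*) [MetricSpace X] where
  toFun : ℝ → X
  len : ℝ
  len_nonneg : 0 ≤ len
  lip : LipschitzOnWith 1 toFun (Set.Icc 0 len)

namespace Curve

variable {X : Type*} [MetricSpace X]

/-- The curve (line) integral `∫_γ g ds` of a nonnegative Borel function. -/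
def integral (γ : Curve X) (g : X → ℝ≥0∞) : ℝ≥0∞ :=
  ∫⁻ t in Set.Icc (0 : ℝ) γ.len, g (γ.toFun t)

/-- A curve is nonconstant if it attains at least two distinct values. -/
def Nonconstant (γ : Curve X) : Prop :=
  ∃ s ∈ Set.Icc (0 : ℝ) γ.len, ∃ t ∈ Set.Icc (0 : ℝ) γ.len, γ.toFun s ≠ γ.toFun t

end Curve

variable {X : Type*} [MetricSpace X] [MeasurableSpace X] [BorelSpace X]

/-- `g` is an upper gradient of `f`: for every rectifiable curve `γ`,
`|f(γ(b)) - f(γ(a))| ≤ ∫_γ g ds`. -/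
def IsUpperGradient (f : X → ℝ) (g : X → ℝ≥0∞) : Prop :=
  Measurable g ∧ ∀ γ : Curve X,
    ENNReal.ofReal |f (γ.toFun γ.len) - f (γ.toFun 0)| ≤ γ.integral g

/-- The family `Γ` of curves has `p`-modulus zero: there is a nonnegative Borel `ρ`
with `∫ ρ^p dμ < ∞` and `∫_γ ρ ds = ∞` for every `γ ∈ Γ`. -/
def ModZero (μ : Measure X) (p : ℝ) (Γ : Set (Curve X)) : Prop :=
  ∃ ρ : X → ℝ≥0∞, Measurable ρ ∧ (∫⁻ x, ρ x ^ p ∂μ) < ∞ ∧ ∀ γ ∈ Γ, γ.integral ρ = ∞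

/-- The family of nonconstant compact rectifiable curves meeting a set `E`. -/
def CurvesMeeting (E : Set X) : Set (Curve X) :=
  {γ | γ.Nonconstant ∧ ∃ t ∈ Set.Icc (0 : ℝ) γ.len, γ.toFun t ∈ E}

/-- A set `E` is `p`-exceptional if `μ E = 0` and the family of nonconstant
compact rectifiable curves meeting `E` has `p`-modulus zero. -/
def PExceptional (μ : Measure X) (p : ℝ) (E : Set X) : Prop :=
  μ E = 0 ∧ ModZero μ p (CurvesMeeting E)

/-- The homogeneous `D^{1,p}` seminorm: infimum of `(∫ g^p dμ)^{1/p}` over upper gradients. -/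
def eLpSeminormD (μ : Measure X) (p : ℝ) (f : X → ℝ) : ℝ≥0∞ :=
  ⨅ (g : X → ℝ≥0∞) (_ : IsUpperGradient f g), (∫⁻ x, g x ^ p ∂μ) ^ (1 / p)

/-- Membership in the homogeneous Newton-Sobolev class `D^{1,p}(X)`:
`f` has an upper gradient `g` with `∫ g^p dμ < ∞`. -/
def MemD1p (μ : Measure X) (p : ℝ) (f : X → ℝ) : Prop :=
  ∃ g : X → ℝ≥0∞, IsUpperGradient f g ∧ (∫⁻ x, g x ^ p ∂μ) < ∞

/-- The `N^{1,p}` norm: `(∫ |f|^p dμ)^{1/p} + inf_g (∫ g^p dμ)^{1/p}`. -/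
def normN1p (μ : Measure X) (p : ℝ) (f : X → ℝ) : ℝ≥0∞ :=
  (∫⁻ x, ENNReal.ofReal |f x| ^ p ∂μ) ^ (1 / p) + eLpSeminormD μ p f

/-- All balls have positive and finite measure. -/
def BallsPosFinite (μ : Measure X) : Prop :=
  ∀ (x : X) (r : ℝ), 0 < r → 0 < μ (Metric.ball x r) ∧ μ (Metric.ball x r) < ∞

/-- The measure `μ` is doubling. -/
def DoublingMeasure (μ : Measure X) : Prop :=
  ∃ Cd : ℝ≥0, ∀ (x : X) (r : ℝ), 0 < r →
    μ (Metric.ball x (2 * r)) ≤ Cd * μ (Metric.ball x r)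

/-- The `p`-Poincaré inequality with constants `C` and `lam`. -/
def PoincareIneq (μ : Measure X) (p C lam : ℝ) : Prop :=
  ∀ (f : X → ℝ) (g : X → ℝ≥0∞), Measurable f → IsUpperGradient f g →
    ∀ (x : X) (r : ℝ), 0 < r →
      (⨍⁻ y in Metric.ball x r,
          ENNReal.ofReal |f y - ⨍ z in Metric.ball x r, f z ∂μ| ∂μ) ≤
        ENNReal.ofReal (C * r) *
          (⨍⁻ y in Metric.ball x (lam * r), g y ^ p ∂μ) ^ (1 / p)

/-- The `(p,p)`-Poincaré inequality with constants `C₀` and `lam₀`. -/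
def PoincarePP (μ : Measure X) (p C₀ lam₀ : ℝ) : Prop :=
  ∀ (f : X → ℝ) (g : X → ℝ≥0∞), Measurable f → IsUpperGradient f g →
    (∫⁻ x, g x ^ p ∂μ) < ∞ →
    ∀ (x : X) (r : ℝ), 0 < r →
      (⨍⁻ y in Metric.ball x r,
          ENNReal.ofReal |f y - ⨍ z in Metric.ball x r, f z ∂μ| ^ p ∂μ) ^ (1 / p) ≤
        ENNReal.ofReal (C₀ * r) *
          (⨍⁻ y in Metric.ball x (lam₀ * r), g y ^ p ∂μ) ^ (1 / p)

/-- a metric measure space with all balls of positive finite measure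
supporting a `p`-Poincaré inequality is connected. -/
theorem stmt9 (μ : Measure X) [μ.Regular] [Nonempty X] (p : ℝ) (hp : 1 ≤ p)
    (hballs : BallsPosFinite μ)
    (hPI : ∃ C > (0 : ℝ), ∃ lam ≥ (1 : ℝ), PoincareIneq μ p C lam) :
    ConnectedSpace X := by
  obtain ⟨C, hC, lam, hlam, hPI⟩ := hPI
  have hp0 : (0 : ℝ) < p := lt_of_lt_of_le one_pos hp
  -- suffices: every clopen set is empty or univ
  by_contra hconn
  have hpre : ¬ PreconnectedSpace X := fun h => hconn (@ConnectedSpace.mk X _ h ‹_›)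
  rw [preconnectedSpace_iff_univ] at hpre
  rw [IsPreconnected] at hpre
  push_neg at hpre
  obtain ⟨u, v, hu, hv, hcov, ⟨a, _, ha⟩, ⟨b, _, hb⟩, hdisj⟩ := hpre
  have hdisj' : u ∩ v = ∅ := by simpa using hdisj
  have hvc : v = uᶜ := by
    apply Subset.antisymm
    · intro x hx hx'
      exact Set.eq_empty_iff_forall_notMem.1 hdisj' x ⟨hx', hx⟩
    · intro x hx
      rcases hcov (mem_univ x) with h | h
      · exact absurd h hx
      · exact h
  have hUclopen : IsClopen u := ⟨by rw [← isOpen_compl_iff, ← hvc]; exact hv, hu⟩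
  -- the indicator function and zero upper gradient
  set f : X → ℝ := Set.indicator u (fun _ => 1) with hf
  have hmeasf : Measurable f :=
    (measurable_const.indicator hUclopen.2.measurableSet)
  have hug : IsUpperGradient f (fun _ => 0) := by
    refine ⟨measurable_const, fun γ => ?_⟩
    have himg : IsPreconnected (γ.toFun '' Set.Icc 0 γ.len) :=
      (isPreconnected_Icc).image _ γ.lip.continuousOn
    have h0 : γ.toFun 0 ∈ γ.toFun '' Set.Icc 0 γ.len :=
      ⟨0, ⟨le_refl _, γ.len_nonneg⟩, rfl⟩
    have hl : γ.toFun γ.len ∈ γ.toFun '' Set.Icc 0 γ.len :=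
      ⟨γ.len, ⟨γ.len_nonneg, le_refl _⟩, rfl⟩
    have key : f (γ.toFun γ.len) = f (γ.toFun 0) := by
      rcases disjoint_or_subset_of_isClopen himg hUclopen with h | h
      · have h1 : γ.toFun γ.len ∉ u := fun hm => (Set.disjoint_left.1 h hl) hm
        have h2 : γ.toFun 0 ∉ u := fun hm => (Set.disjoint_left.1 h h0) hm
        simp [hf, Set.indicator_of_notMem, h1, h2]
      · simp [hf, Set.indicator_of_mem (h hl), Set.indicator_of_mem (h h0)]
    simp [key]
  obtain ⟨x₀, hx₀⟩ : ∃ x, x ∈ u := ⟨a, ha⟩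
  obtain ⟨y₀, hy₀⟩ : ∃ y, y ∉ u := ⟨b, by rw [hvc] at hb; exact hb⟩
  set r : ℝ := dist x₀ y₀ + 1 with hr
  have hrpos : 0 < r := by positivity
  set B := Metric.ball x₀ r with hB
  -- Poincaré applied to f with zero gradient
  have hPIa := hPI f (fun _ => 0) hmeasf hug x₀ r hrpos
  have hrhs : ENNReal.ofReal (C * r) *
      (⨍⁻ _ in Metric.ball x₀ (lam * r), (0 : ℝ≥0∞) ^ p ∂μ) ^ (1 / p) = 0 := by
    have h1 : ((0 : ℝ≥0∞) ^ p) = 0 := ENNReal.zero_rpow_of_pos hp0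
    have hz : (⨍⁻ _ in Metric.ball x₀ (lam * r), (0 : ℝ≥0∞) ∂μ) = 0 := by
      simp [laverage_eq]
    rw [h1, hz, ENNReal.zero_rpow_of_pos (by positivity : (0:ℝ) < 1 / p), mul_zero]
  rw [hrhs, le_zero_iff] at hPIa
  set c : ℝ := ⨍ z in B, f z ∂μ with hc
  have hBfin : μ B ≠ ∞ := (hballs x₀ r hrpos).2.ne
  have hint : ∫⁻ y in B, ENNReal.ofReal |f y - c| ∂μ = 0 := by
    have := hPIa
    rw [setLAverage_eq] at this
    rcases (ENNReal.div_eq_zero_iff).1 this with h | h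
    · exact h
    · exact absurd h hBfin
  have hmeas2 : Measurable fun y => ENNReal.ofReal |f y - c| :=
    ((hmeasf.sub measurable_const).abs).ennreal_ofReal
  have hae : ∀ᵐ y ∂(μ.restrict B), ENNReal.ofReal |f y - c| = 0 :=
    (lintegral_eq_zero_iff hmeas2).1 hint
  have hae' : ∀ᵐ y ∂(μ.restrict B), f y = c := by
    filter_upwards [hae] with y hy
    have h := ENNReal.ofReal_eq_zero.1 hy
    have habs : |f y - c| = 0 := le_antisymm h (abs_nonneg _)
    linarith [abs_eq_zero.1 habs]
  -- a positive measure subset of B inside u where f = 1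
  have keyval : ∀ (w : X) (hw : w ∈ B) (s : Set X), IsOpen s → w ∈ s →
      (∀ y ∈ s, f y = f w) → f w = c := by
    intro w hwB s hs hws hval
    obtain ⟨ε, hε, hball⟩ := Metric.isOpen_iff.1 hs w hws
    obtain ⟨ε', hε', hball'⟩ := Metric.isOpen_iff.1 Metric.isOpen_ball w hwB
    set δ := min ε ε' with hδ
    have hδpos : 0 < δ := lt_min hε hε'
    have hsub : Metric.ball w δ ⊆ s := (Metric.ball_subset_ball (min_le_left _ _)).trans hball
    have hsubB : Metric.ball w δ ⊆ B := (Metric.ball_subset_ball (min_le_right _ _)).trans hball'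
    by_contra hne
    have hmset : MeasurableSet {y | ¬ f y = c} := (hmeasf (measurableSet_singleton c)).compl
    have h1 : μ.restrict B {y | ¬ f y = c} = 0 := ae_iff.1 hae'
    have h1' : μ ({y | ¬ f y = c} ∩ B) = 0 := by
      rw [← Measure.restrict_apply hmset]; exact h1
    have h2 : Metric.ball w δ ⊆ {y | ¬ f y = c} ∩ B := by
      intro y hy
      refine ⟨?_, hsubB hy⟩
      simp only [Set.mem_setOf_eq]
      rw [hval y (hsub hy)]
      exact hne
    have hzero : μ (Metric.ball w δ) = 0 :=
      le_antisymm ((measure_mono h2).trans_eq h1') zero_le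
    exact absurd hzero (hballs w δ hδpos).1.ne'
  have hx₀B : x₀ ∈ B := Metric.mem_ball_self hrpos
  have hy₀B : y₀ ∈ B := by
    rw [hB, Metric.mem_ball]
    rw [hr, dist_comm]
    linarith
  have h1 : f x₀ = c := keyval x₀ hx₀B u hu hx₀ (fun y hy => by
    simp [hf, Set.indicator_of_mem, hy, hx₀])
  have h0 : f y₀ = c := keyval y₀ hy₀B uᶜ (by rw [← hvc]; exact hv) hy₀ (fun y hy => by
    simp only [hf]; rw [Set.indicator_of_notMem hy, Set.indicator_of_notMem hy₀])
  rw [hf] at h1 h0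
  simp [Set.indicator_of_mem hx₀, Set.indicator_of_notMem hy₀] at h1 h0
  rw [← h0] at h1
  norm_num at h1
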